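/- Let f₁, f₂ : ℝ² → ℝ be continuous on a compact box x₁ × x₂ ⊂ ℝ², and let z₁, z₂ be intervals. Suppose there exist continuous selections g₂ : z₁ × x₁ → x₂ and g₁ : z₂ × x₂ → x₁ such that f₁(x₁, g₂(z₁,x₁)) = z₁ for all (z₁,x₁) and f₂(g₁(z₂,x₂), x₂) = z₂ for all (z₂,x₂). Then for every (z₁,z₂) ∈ z₁ × z₂ there exists (x₁,x₂) ∈ x₁ × x₂ with f₁(x₁,x₂) = z₁ and f₂(x₁,x₂) = z₂, i.e., z₁ × z₂ ⊆ range((f₁,f₂), x₁ × x₂). -/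
import Mathlib


/-- Two-dimensional case of Theorem 3 (joint under-approximation): given continuous
selections `g₂` and `g₁` witnessing the two AE propositions, every point of
`z₁ × z₂` is in the range of `(f₁, f₂)` over `x₁ × x₂`. -/
theorem joint_under_approx_dim2
    (f₁ f₂ : ℝ × ℝ → ℝ)
    (a₁ b₁ a₂ b₂ : ℝ) (hx₁ : a₁ ≤ b₁) (hx₂ : a₂ ≤ b₂)
    (c₁ d₁ c₂ d₂ : ℝ) (hz₁ : c₁ ≤ d₁) (hz₂ : c₂ ≤ d₂)
    (hf₁ : ContinuousOn f₁ (Set.Icc a₁ b₁ ×ˢ Set.Icc a₂ b₂))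
    (hf₂ : ContinuousOn f₂ (Set.Icc a₁ b₁ ×ˢ Set.Icc a₂ b₂))
    (g₂ : ℝ × ℝ → ℝ) (g₁ : ℝ × ℝ → ℝ)
    (hg₂cont : ContinuousOn g₂ (Set.Icc c₁ d₁ ×ˢ Set.Icc a₁ b₁))
    (hg₁cont : ContinuousOn g₁ (Set.Icc c₂ d₂ ×ˢ Set.Icc a₂ b₂))
    (hg₂maps : ∀ z₁ ∈ Set.Icc c₁ d₁, ∀ x₁ ∈ Set.Icc a₁ b₁, g₂ (z₁, x₁) ∈ Set.Icc a₂ b₂)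
    (hg₁maps : ∀ z₂ ∈ Set.Icc c₂ d₂, ∀ x₂ ∈ Set.Icc a₂ b₂, g₁ (z₂, x₂) ∈ Set.Icc a₁ b₁)
    (hg₂sel : ∀ z₁ ∈ Set.Icc c₁ d₁, ∀ x₁ ∈ Set.Icc a₁ b₁, f₁ (x₁, g₂ (z₁, x₁)) = z₁)
    (hg₁sel : ∀ z₂ ∈ Set.Icc c₂ d₂, ∀ x₂ ∈ Set.Icc a₂ b₂, f₂ (g₁ (z₂, x₂), x₂) = z₂) :
    ∀ z₁ ∈ Set.Icc c₁ d₁, ∀ z₂ ∈ Set.Icc c₂ d₂,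
      ∃ x₁ ∈ Set.Icc a₁ b₁, ∃ x₂ ∈ Set.Icc a₂ b₂,
        f₁ (x₁, x₂) = z₁ ∧ f₂ (x₁, x₂) = z₂ := by
  intro z₁ hz₁m z₂ hz₂m
  -- composite map h : [a₁,b₁] → [a₁,b₁]
  set h : ℝ → ℝ := fun x => g₁ (z₂, g₂ (z₁, x)) with hh
  have hmaps : ∀ x ∈ Set.Icc a₁ b₁, h x ∈ Set.Icc a₁ b₁ := fun x hx =>
    hg₁maps z₂ hz₂m _ (hg₂maps z₁ hz₁m x hx)
  have hcont : ContinuousOn h (Set.Icc a₁ b₁) := by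
    apply hg₁cont.comp
    · exact ContinuousOn.prodMk continuousOn_const
        (hg₂cont.comp (ContinuousOn.prodMk continuousOn_const continuousOn_id)
          (fun x hx => ⟨hz₁m, hx⟩))
    · exact fun x hx => ⟨hz₂m, hg₂maps z₁ hz₁m x hx⟩
  -- find a fixed point of h via IVT on φ x = h x - x
  have hφcont : ContinuousOn (fun x => h x - x) (Set.Icc a₁ b₁) :=
    hcont.sub continuousOn_id
  have h0 : (0 : ℝ) ∈ Set.Icc (h b₁ - b₁) (h a₁ - a₁) := by
    constructor
    · have := (hmaps b₁ ⟨hx₁, le_refl b₁⟩).2; linarith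
    · have := (hmaps a₁ ⟨le_refl a₁, hx₁⟩).1; linarith
  obtain ⟨x₁, hx₁m, hfix0⟩ := intermediate_value_Icc' hx₁ hφcont h0
  have hfix : h x₁ = x₁ := by simpa using sub_eq_zero.mp hfix0
  refine ⟨x₁, hx₁m, g₂ (z₁, x₁), hg₂maps z₁ hz₁m x₁ hx₁m, ?_, ?_⟩
  · exact hg₂sel z₁ hz₁m x₁ hx₁m
  · have := hg₁sel z₂ hz₂m (g₂ (z₁, x₁)) (hg₂maps z₁ hz₁m x₁ hx₁m)
    rw [show g₁ (z₂, g₂ (z₁, x₁)) = x₁ from hfix] at this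
    exact this
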